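/- arXiv:2001.06709 — 3 statements merged into one kernel-verified Lean document; each statement's English description precedes it below -/
import Mathlib

section
/- Let A be a k-algebra with center Z, and let f1,...,fn be elements of Z[Y1,...,Yn] (polynomials with central coefficients inside A[Y1,...,Yn]) such that the Z-subalgebra of Z[Y1,...,Yn] generated by f1,...,fn is all of Z[Y1,...,Yn]. Then the ring endomorphism τ of A[Y1,...,Yn] that restricts to the identity on A and sends Yi to fi for each 1 ≤ i ≤ n is an isomorphism. -/
open scoped TensorProduct

universe u

/-- The polynomial extension `A[t₁,…,tₙ]` of a (possibly noncommutative) `k`-algebra `A`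
in `n` central, mutually commuting indeterminates. -/
abbrev PolyExt (A : Type u) [Ring A] (n : ℕ) : Type u :=
  AddMonoidAlgebra A (Fin n →₀ ℕ)

/-- The canonical embedding `A → A[t₁,…,tₙ]` as constant polynomials. -/
noncomputable def PolyExt.C (k A : Type u) [Field k] [Ring A] [Algebra k A] (n : ℕ) :
    A →ₐ[k] PolyExt A n :=
  AddMonoidAlgebra.singleZeroAlgHom

/-- The `i`-th indeterminate of `A[t₁,…,tₙ]`. -/
noncomputable def PolyExt.X (A : Type u) [Ring A] (n : ℕ) (i : Fin n) : PolyExt A n :=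
  AddMonoidAlgebra.single (Finsupp.single i 1) 1

/-- Two rings are Morita equivalent if their categories of right modules are
equivalent (as abelian categories). -/
def MoritaEquivalent (R S : Type u) [Ring R] [Ring S] : Prop :=
  Nonempty (ModuleCat.{u} Rᵐᵒᵖ ≌ ModuleCat.{u} Sᵐᵒᵖ)

/-- `A` is strongly cancellative: for every `n ≥ 1` and every `k`-algebra `B`, any
`k`-algebra isomorphism `A[s₁,…,sₙ] ≅ B[t₁,…,tₙ]` implies `A ≅ B`. -/
def StronglyCancellative (k A : Type u) [Field k] [Ring A] [Algebra k A] : Prop :=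
  ∀ (n : ℕ), 1 ≤ n → ∀ (B : Type u) [Ring B] [Algebra k B],
    Nonempty (PolyExt A n ≃ₐ[k] PolyExt B n) → Nonempty (A ≃ₐ[k] B)

/-- `A` is strongly Morita cancellative: for every `n ≥ 1` and every `k`-algebra `B`,
Morita equivalence of `A[s₁,…,sₙ]` and `B[t₁,…,tₙ]` implies Morita equivalence of `A` and `B`. -/
def StronglyMoritaCancellative (k A : Type u) [Field k] [Ring A] [Algebra k A] : Prop :=
  ∀ (n : ℕ), 1 ≤ n → ∀ (B : Type u) [Ring B] [Algebra k B],
    MoritaEquivalent (PolyExt A n) (PolyExt B n) → MoritaEquivalent A B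

/-- `A` is strongly retractable: every `k`-algebra isomorphism
`φ : A[s₁,…,sₙ] → B[t₁,…,tₙ]` (with `n ≥ 1`) satisfies `φ(A) = B`. -/
def StronglyRetractable (k A : Type u) [Field k] [Ring A] [Algebra k A] : Prop :=
  ∀ (n : ℕ), 1 ≤ n → ∀ (B : Type u) [Ring B] [Algebra k B]
    (φ : PolyExt A n ≃ₐ[k] PolyExt B n),
    φ '' Set.range (PolyExt.C k A n) = Set.range (PolyExt.C k B n)

/-- `A` is strongly detectable: for every `k`-algebra isomorphism
`φ : A[s₁,…,sₙ] → B[t₁,…,tₙ]` (with `n ≥ 1`), the subalgebra of `B[t₁,…,tₙ]` generated by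
`B` together with `φ(s₁),…,φ(sₙ)` is all of `B[t₁,…,tₙ]`. -/
def StronglyDetectable (k A : Type u) [Field k] [Ring A] [Algebra k A] : Prop :=
  ∀ (n : ℕ), 1 ≤ n → ∀ (B : Type u) [Ring B] [Algebra k B]
    (φ : PolyExt A n ≃ₐ[k] PolyExt B n),
    Algebra.adjoin k
      (Set.range (PolyExt.C k B n) ∪ Set.range fun i => φ (PolyExt.X A n i)) = ⊤


section BRAux

open AddMonoidAlgebra

variable {R B : Type*} [Semiring R] [Semiring B] {n : ℕ}

private lemma braux_single_pow (i : Fin n) (e : ℕ) :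
    (AddMonoidAlgebra.single (Finsupp.single i e) (1 : R) : AddMonoidAlgebra R (Fin n →₀ ℕ)) =
      AddMonoidAlgebra.single (Finsupp.single i 1) (1 : R) ^ e := by
  induction e with
  | zero => simp [AddMonoidAlgebra.one_def]
  | succ e ih =>
      rw [pow_succ, ← ih, AddMonoidAlgebra.single_mul_single, one_mul, ← Finsupp.single_add]

private lemma braux_single_add (m₁ m₂ : Fin n →₀ ℕ) :
    (AddMonoidAlgebra.single (m₁ + m₂) (1 : R) : AddMonoidAlgebra R (Fin n →₀ ℕ)) =
      AddMonoidAlgebra.single m₁ 1 * AddMonoidAlgebra.single m₂ 1 := by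
  rw [AddMonoidAlgebra.single_mul_single, one_mul]

private lemma braux_ringHom_ext (Φ Ψ : AddMonoidAlgebra R (Fin n →₀ ℕ) →+* B)
    (hC : ∀ a : R, Φ (AddMonoidAlgebra.single 0 a) = Ψ (AddMonoidAlgebra.single 0 a))
    (hX : ∀ i : Fin n, Φ (AddMonoidAlgebra.single (Finsupp.single i 1) 1) =
      Ψ (AddMonoidAlgebra.single (Finsupp.single i 1) 1)) : Φ = Ψ := by
  refine AddMonoidAlgebra.ringHom_ext hC fun m => ?_
  induction m using Finsupp.induction with
  | zero => exact hC 1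
  | single_add i e m him he ih =>
      rw [braux_single_add, map_mul, map_mul, braux_single_pow, map_pow, map_pow, hX, ih]

private lemma braux_comm {A : Type*} [Ring A] {n : ℕ}
    (x : AddMonoidAlgebra A (Fin n →₀ ℕ)) (hx : ∀ m, x.coeff m ∈ Set.center A)
    (y : AddMonoidAlgebra A (Fin n →₀ ℕ)) :
    y * x = x * y := by
  conv_lhs => rw [← AddMonoidAlgebra.sum_coeff_single x, Finsupp.mul_sum]
  conv_rhs => rw [← AddMonoidAlgebra.sum_coeff_single x, Finsupp.sum_mul]
  refine Finsupp.sum_congr fun m hm => ?_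
  conv_lhs => rw [← AddMonoidAlgebra.sum_coeff_single y, Finsupp.sum_mul]
  conv_rhs => rw [← AddMonoidAlgebra.sum_coeff_single y, Finsupp.mul_sum]
  refine Finsupp.sum_congr fun m' hm' => ?_
  show AddMonoidAlgebra.single m' (y.coeff m') * AddMonoidAlgebra.single m (x.coeff m)
      = AddMonoidAlgebra.single m (x.coeff m) * AddMonoidAlgebra.single m' (y.coeff m')
  rw [AddMonoidAlgebra.single_mul_single, AddMonoidAlgebra.single_mul_single, add_comm m' m,
    Semigroup.mem_center_iff.mp (hx m) (y.coeff m')]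

private lemma braux_finite_range {α M : Type*} [Zero M] (x : α →₀ M) :
    (Set.range (x : α → M)).Finite := by
  classical
  refine Set.Finite.subset (((x.support : Set α).toFinite.image x).insert 0) ?_
  rintro a ⟨m, rfl⟩
  by_cases h : m ∈ x.support
  · exact Set.mem_insert_iff.2 (Or.inr ⟨m, h, rfl⟩)
  · rw [Finsupp.mem_support_iff, not_not] at h
    exact Set.mem_insert_iff.2 (Or.inl h)

end BRAux

/-- (Brewer–Rutter) Let `Z` be the center of `A` and let
`f₁,…,fₙ ∈ Z[Y₁,…,Yₙ] ⊆ A[Y₁,…,Yₙ]` (polynomials all of whose coefficients are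
central) be `Z`-algebra generators of `Z[Y₁,…,Yₙ]`.  Then the endomorphism `τ` of
`A[Y₁,…,Yₙ]` restricting to the identity on `A` and sending `Yᵢ` to `fᵢ` is an
isomorphism.  Here `Z[Y₁,…,Yₙ]` is formalized as the set of polynomials with all
coefficients in the center of `A`. -/
theorem endomorphism_sending_vars_to_central_generators_is_isomorphism
    (k A : Type u) [Field k] [Ring A] [Algebra k A] (n : ℕ)
    (f : Fin n → PolyExt A n)
    (hf : ∀ i, ∀ m, (f i).coeff m ∈ Set.center A)
    (hgen : (Subring.closure
        ((PolyExt.C k A n) '' Set.center A ∪ Set.range f) : Set (PolyExt A n)) =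
      {x : PolyExt A n | ∀ m, x.coeff m ∈ Set.center A})
    (τ : PolyExt A n →+* PolyExt A n)
    (hτA : ∀ a : A, τ (PolyExt.C k A n a) = PolyExt.C k A n a)
    (hτX : ∀ i, τ (PolyExt.X A n i) = f i) :
    Function.Bijective τ := by
  classical
  have hCdef : ∀ a : A, PolyExt.C k A n a = AddMonoidAlgebra.single 0 a := fun a => rfl
  have hXdef : ∀ i : Fin n,
      PolyExt.X A n i = AddMonoidAlgebra.single (Finsupp.single i 1) (1 : A) := fun i => rfl
  set ZS : Subring (PolyExt A n) :=
    Subring.closure ((PolyExt.C k A n) '' Set.center A ∪ Set.range f) with hZSdef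
  have hZS : ∀ x : PolyExt A n, x ∈ ZS ↔ ∀ m, x.coeff m ∈ Set.center A := by
    intro x
    rw [← SetLike.mem_coe, hgen]
    exact Iff.rfl
  have honec : ∀ (m' m : Fin n →₀ ℕ),
      (AddMonoidAlgebra.single m' (1 : A) : PolyExt A n).coeff m ∈ Set.center A := by
    intro m' m
    rw [AddMonoidAlgebra.coeff_single, Finsupp.single_apply]
    split
    · exact Set.one_mem_center
    · exact Set.zero_mem_center
  have hXZS : ∀ i, PolyExt.X A n i ∈ ZS := fun i => (hZS _).2 fun m => honec _ _
  have hfZS : ∀ i, f i ∈ ZS := fun i => Subring.subset_closure (Or.inr ⟨i, rfl⟩)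
  have hCZS : ∀ a ∈ Set.center A, (AddMonoidAlgebra.single 0 a : PolyExt A n) ∈ ZS :=
    fun a ha => Subring.subset_closure (Or.inl ⟨a, ha, (hCdef a).symm⟩)
  set W : Subring (PolyExt A n) :=
    Subring.closure ((PolyExt.C k A n) '' Set.center A ∪ Set.range (PolyExt.X A n)) with hWdef
  have hWZS : W ≤ ZS := by
    refine Subring.closure_le.2 (Set.union_subset ?_ ?_)
    · rintro y ⟨a, ha, rfl⟩
      rw [hCdef]
      exact hCZS a ha
    · rintro y ⟨i, rfl⟩
      exact hXZS i
  have hmap : W.map τ = ZS := by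
    rw [hWdef, RingHom.map_closure, hZSdef]
    congr 1
    rw [Set.image_union]
    congr 1
    · rw [Set.image_image]
      exact Set.image_congr fun a _ => hτA a
    · ext y
      constructor
      · rintro ⟨-, ⟨i, rfl⟩, rfl⟩
        exact ⟨i, (hτX i).symm⟩
      · rintro ⟨i, rfl⟩
        exact ⟨PolyExt.X A n i, ⟨i, rfl⟩, hτX i⟩
  have hgex : ∀ i, ∃ gi, gi ∈ W ∧ τ gi = PolyExt.X A n i := by
    intro i
    have hm : PolyExt.X A n i ∈ W.map τ := hmap.symm ▸ hXZS i
    rcases Subring.mem_map.1 hm with ⟨gi, hgi, hτgi⟩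
    exact ⟨gi, hgi, hτgi⟩
  choose g hgW hgτ using hgex
  have hgZS : ∀ i, g i ∈ ZS := fun i => hWZS (hgW i)
  have hgc : ∀ i m, (g i).coeff m ∈ Set.center A := fun i => (hZS _).1 (hgZS i)
  have hgcen : ∀ i, g i ∈ Subring.center (PolyExt A n) := fun i =>
    Subring.mem_center_iff.2 (braux_comm _ (hgc i))
  set gc : Fin n → Subring.center (PolyExt A n) := fun i => ⟨g i, hgcen i⟩ with hgcdef
  let G₀ : Multiplicative (Fin n →₀ ℕ) →* Subring.center (PolyExt A n) :=
  { toFun := fun m => (Multiplicative.toAdd m).prod fun i e => gc i ^ e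
    map_one' := Finsupp.prod_zero_index
    map_mul' := fun m₁ m₂ =>
      Finsupp.prod_add_index' (fun i => pow_zero _) fun i e₁ e₂ => pow_add _ _ _ }
  let Gm : Multiplicative (Fin n →₀ ℕ) →* PolyExt A n :=
    ((Subring.center (PolyExt A n)).subtype : Subring.center (PolyExt A n) →+* PolyExt A n
      ).toMonoidHom.comp G₀
  have hG₀single : ∀ (i : Fin n) (e : ℕ),
      Gm (Multiplicative.ofAdd (Finsupp.single i e)) = g i ^ e := by
    intro i e
    have h1 : G₀ (Multiplicative.ofAdd (Finsupp.single i e)) = gc i ^ e :=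
      Finsupp.prod_single_index (pow_zero _)
    show ((G₀ (Multiplicative.ofAdd (Finsupp.single i e)) : PolyExt A n)) = g i ^ e
    rw [h1, hgcdef]
    push_cast
    rfl
  have hGmZS : ∀ m : Fin n →₀ ℕ, Gm (Multiplicative.ofAdd m) ∈ ZS := by
    intro m
    induction m using Finsupp.induction with
    | zero =>
        rw [show Multiplicative.ofAdd (0 : Fin n →₀ ℕ) = 1 from rfl, map_one]
        exact one_mem ZS
    | single_add i e m him he ih =>
        rw [show Multiplicative.ofAdd (Finsupp.single i e + m)
            = Multiplicative.ofAdd (Finsupp.single i e) * Multiplicative.ofAdd m from rfl,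
          map_mul]
        exact Subring.mul_mem _ (by rw [hG₀single]; exact Subring.pow_mem _ (hgZS i) _) ih
  let σ : PolyExt A n →+* PolyExt A n :=
    AddMonoidAlgebra.liftNCRingHom (AddMonoidAlgebra.singleZeroRingHom) Gm
      (fun a m => Subring.mem_center_iff.1 (G₀ m).2 _)
  have hσ : ∀ (m : Fin n →₀ ℕ) (a : A),
      σ (AddMonoidAlgebra.single m a)
        = AddMonoidAlgebra.single 0 a * Gm (Multiplicative.ofAdd m) :=
    fun m a => AddMonoidAlgebra.liftNC_single _ _ _ _
  have hσC : ∀ a : A, σ (AddMonoidAlgebra.single 0 a) = AddMonoidAlgebra.single 0 a := by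
    intro a
    rw [hσ, show Multiplicative.ofAdd (0 : Fin n →₀ ℕ) = 1 from rfl, map_one, mul_one]
  have hσX : ∀ i, σ (PolyExt.X A n i) = g i := by
    intro i
    rw [hXdef, hσ, hG₀single i 1, pow_one, ← AddMonoidAlgebra.one_def, one_mul]
  have hτσ : τ.comp σ = RingHom.id (PolyExt A n) := by
    apply braux_ringHom_ext
    · intro a
      simp only [RingHom.comp_apply, RingHom.id_apply]
      rw [hσC]
      have h1 := hτA a
      rw [hCdef] at h1
      exact h1
    · intro i
      simp only [RingHom.comp_apply, RingHom.id_apply]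
      rw [← hXdef, hσX, hgτ, hXdef]
  -- injectivity of τ on polynomials with central coefficients
  have hτinj0 : ∀ x : PolyExt A n, (∀ m, x.coeff m ∈ Set.center A) → τ x = 0 → x = 0 := by
    intro x hx hτx
    set s : Set A := Set.range ⇑x.coeff ∪ ((⋃ i, Set.range ⇑(f i).coeff) ∪ ⋃ i, Set.range ⇑(g i).coeff)
      with hsdef
    have hsfin : s.Finite :=
      (braux_finite_range x.coeff).union
        ((Set.finite_iUnion fun i => braux_finite_range (f i).coeff).union
          (Set.finite_iUnion fun i => braux_finite_range (g i).coeff))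
    have hsc : ∀ a ∈ s, a ∈ Set.center A := by
      intro a ha
      rcases ha with h | h | h
      · rcases h with ⟨m, rfl⟩
        exact hx m
      · rcases Set.mem_iUnion.1 h with ⟨i, m, rfl⟩
        exact hf i m
      · rcases Set.mem_iUnion.1 h with ⟨i, m, rfl⟩
        exact hgc i m
    let R₀ : Subalgebra ℤ A := Algebra.adjoin ℤ s
    letI : CommRing R₀ :=
      Algebra.adjoinCommRingOfComm ℤ fun a ha b hb =>
        Semigroup.mem_center_iff.1 (hsc b hb) a
    haveI : Algebra.FiniteType ℤ R₀ := by
      constructor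
      have hpre : ((Subtype.val : R₀ → A) ⁻¹' s).Finite :=
        hsfin.preimage (Set.injOn_of_injective Subtype.val_injective)
      refine ⟨hpre.toFinset, ?_⟩
      rw [Set.Finite.coe_toFinset]
      exact Algebra.adjoin_adjoin_coe_preimage
    haveI : IsNoetherianRing R₀ := Algebra.FiniteType.isNoetherianRing ℤ R₀
    haveI hNoeth : IsNoetherianRing (MvPolynomial (Fin n) R₀) :=
      MvPolynomial.isNoetherianRing_fin
    -- the coefficientwise embedding of `R₀[Y]` into `A[Y]`
    let Xm : Multiplicative (Fin n →₀ ℕ) →* PolyExt A n :=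
    { toFun := fun m => AddMonoidAlgebra.single (Multiplicative.toAdd m) 1
      map_one' := AddMonoidAlgebra.one_def.symm
      map_mul' := fun m₁ m₂ => braux_single_add _ _ }
    let c₀ : R₀ →+* PolyExt A n :=
      (AddMonoidAlgebra.singleZeroRingHom : A →+* PolyExt A n).comp (R₀.val.toRingHom)
    let ι : MvPolynomial (Fin n) R₀ →+* PolyExt A n :=
      AddMonoidAlgebra.liftNCRingHom c₀ Xm (fun r m => by
        show AddMonoidAlgebra.single 0 (r : A) * AddMonoidAlgebra.single (Multiplicative.toAdd m) 1
          = AddMonoidAlgebra.single (Multiplicative.toAdd m) 1 * AddMonoidAlgebra.single 0 (r : A)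
        rw [AddMonoidAlgebra.single_mul_single, AddMonoidAlgebra.single_mul_single, zero_add,
          add_zero, one_mul, mul_one])
    have hιsingle : ∀ (m : Fin n →₀ ℕ) (r : R₀),
        ι (AddMonoidAlgebra.single m r) = AddMonoidAlgebra.single m (r : A) := by
      intro m r
      have h1 : ι (AddMonoidAlgebra.single m r)
          = c₀ r * Xm (Multiplicative.ofAdd m) := AddMonoidAlgebra.liftNC_single _ _ _ _
      rw [h1]
      show AddMonoidAlgebra.single 0 (r : A) * AddMonoidAlgebra.single m 1 = _
      rw [AddMonoidAlgebra.single_mul_single, zero_add, mul_one]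
    have hιcoeff : ∀ (q : AddMonoidAlgebra R₀ (Fin n →₀ ℕ)) (m : Fin n →₀ ℕ),
        (ι q).coeff m = ((q.coeff m : R₀) : A) := by
      intro q
      induction q using AddMonoidAlgebra.induction with
      | zero =>
          intro m
          rw [map_zero]
          simp
      | single_add m' r q' hm' hr ih =>
          intro m
          rw [map_add, hιsingle, AddMonoidAlgebra.coeff_add, AddMonoidAlgebra.coeff_add,
            Finsupp.add_apply, Finsupp.add_apply, ih m, AddMonoidAlgebra.coeff_single,
            AddMonoidAlgebra.coeff_single, Finsupp.single_apply, Finsupp.single_apply]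
          split_ifs <;> simp
    have hιinj : Function.Injective ι := by
      intro p q hpq
      refine AddMonoidAlgebra.coeff_injective (Finsupp.ext fun m => ?_)
      refine Subtype.val_injective ?_
      rw [← hιcoeff, ← hιcoeff, hpq]
    have hlift : ∀ y : PolyExt A n, (∀ m, y.coeff m ∈ R₀) → ∃ q, ι q = y := by
      intro y hy
      refine ⟨AddMonoidAlgebra.ofCoeff ⟨y.coeff.support, fun m => ⟨y.coeff m, hy m⟩, fun m => ?_⟩, ?_⟩
      · simp [Finsupp.mem_support_iff, Subtype.ext_iff]
      · refine AddMonoidAlgebra.coeff_injective (Finsupp.ext fun m => ?_)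
        rw [hιcoeff]
        rfl
    have hfR : ∀ i m, (f i).coeff m ∈ R₀ := fun i m =>
      Algebra.subset_adjoin (Or.inr (Or.inl (Set.mem_iUnion.2 ⟨i, Set.mem_range_self m⟩)))
    have hgR : ∀ i m, (g i).coeff m ∈ R₀ := fun i m =>
      Algebra.subset_adjoin (Or.inr (Or.inr (Set.mem_iUnion.2 ⟨i, Set.mem_range_self m⟩)))
    have hxR : ∀ m, x.coeff m ∈ R₀ := fun m => Algebra.subset_adjoin (Or.inl (Set.mem_range_self m))
    choose F hF using fun i => hlift (f i) (hfR i)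
    choose G' hG' using fun i => hlift (g i) (hgR i)
    obtain ⟨x₀, hx₀⟩ := hlift x hxR
    have hcommkey : ∀ (u : Fin n → MvPolynomial (Fin n) R₀) (V : PolyExt A n →+* PolyExt A n),
        (∀ a : A, V (AddMonoidAlgebra.single 0 a) = AddMonoidAlgebra.single 0 a) →
        (∀ i, ι (u i) = V (AddMonoidAlgebra.single (Finsupp.single i 1) 1)) →
        ι.comp (MvPolynomial.eval₂Hom MvPolynomial.C u) = V.comp ι := by
      intro u V hV0 hVu
      apply braux_ringHom_ext
      · intro b
        simp only [RingHom.comp_apply]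
        have hCb : (AddMonoidAlgebra.single 0 b : MvPolynomial (Fin n) R₀)
            = MvPolynomial.C b :=
          (MvPolynomial.single_eq_monomial 0 b).trans (MvPolynomial.C_apply (a := b)).symm
        have e1 : MvPolynomial.eval₂Hom MvPolynomial.C u (MvPolynomial.C b)
            = MvPolynomial.C b := MvPolynomial.eval₂Hom_C _ _ _
        have step1 : MvPolynomial.eval₂Hom MvPolynomial.C u (AddMonoidAlgebra.single 0 b)
            = MvPolynomial.C b := (congrArg _ hCb).trans e1
        have step2 : ι (MvPolynomial.C b) = AddMonoidAlgebra.single 0 (b : A) :=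
          (congrArg ι hCb.symm).trans (hιsingle 0 b)
        exact ((congrArg ι step1).trans step2).trans
          ((hV0 (b : A)).symm.trans (congrArg V (hιsingle 0 b).symm))
      · intro i
        simp only [RingHom.comp_apply]
        have hXb : (AddMonoidAlgebra.single (Finsupp.single i 1) 1 : MvPolynomial (Fin n) R₀)
            = MvPolynomial.X i := MvPolynomial.single_eq_monomial _ _
        have e1 : MvPolynomial.eval₂Hom MvPolynomial.C u (MvPolynomial.X i) = u i :=
          MvPolynomial.eval₂Hom_X' _ _ _
        have step1 : MvPolynomial.eval₂Hom MvPolynomial.C u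
              (AddMonoidAlgebra.single (Finsupp.single i 1) 1)
            = u i := (congrArg _ hXb).trans e1
        have e4 : ι (AddMonoidAlgebra.single (Finsupp.single i 1) (1 : R₀))
            = AddMonoidAlgebra.single (Finsupp.single i 1) (1 : A) :=
          (hιsingle _ _).trans
            (congrArg (AddMonoidAlgebra.single (Finsupp.single i 1)) (OneMemClass.coe_one _))
        exact (congrArg ι step1).trans ((hVu i).trans (congrArg V e4.symm))
    let T₀ : MvPolynomial (Fin n) R₀ →+* MvPolynomial (Fin n) R₀ :=
      MvPolynomial.eval₂Hom MvPolynomial.C F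
    let S₀ : MvPolynomial (Fin n) R₀ →+* MvPolynomial (Fin n) R₀ :=
      MvPolynomial.eval₂Hom MvPolynomial.C G'
    have hcT : ι.comp T₀ = τ.comp ι := by
      refine hcommkey F τ (fun a => ?_) (fun i => ?_)
      · have h1 := hτA a
        rw [hCdef] at h1
        exact h1
      · rw [hF i, ← hXdef]
        exact (hτX i).symm
    have hcS : ι.comp S₀ = σ.comp ι := by
      refine hcommkey G' σ hσC (fun i => ?_)
      rw [hG' i, ← hXdef]
      exact (hσX i).symm
    have hιTS : ι.comp (T₀.comp S₀) = ι := by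
      rw [← RingHom.comp_assoc, hcT, RingHom.comp_assoc, hcS, ← RingHom.comp_assoc, hτσ,
        RingHom.id_comp]
    have hTS : ∀ q, T₀ (S₀ q) = q := by
      intro q
      apply hιinj
      exact RingHom.congr_fun hιTS q
    have hTsurj : Function.Surjective T₀ := fun q => ⟨S₀ q, hTS q⟩
    let Thom : ℕ → (MvPolynomial (Fin n) R₀ →+* MvPolynomial (Fin n) R₀) :=
      fun j => Nat.rec (RingHom.id _) (fun _ ih => T₀.comp ih) j
    have hThomS : ∀ j, Thom (j + 1) = T₀.comp (Thom j) := fun j => rfl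
    have hThomSurj : ∀ j, Function.Surjective (Thom j) := by
      intro j
      induction j with
      | zero => exact fun q => ⟨q, rfl⟩
      | succ j ih =>
          intro q
          obtain ⟨y, hy⟩ := hTsurj q
          obtain ⟨z, hz⟩ := ih y
          exact ⟨z, by rw [hThomS, RingHom.comp_apply, hz, hy]⟩
    let K : ℕ →o Ideal (MvPolynomial (Fin n) R₀) :=
      ⟨fun j => RingHom.ker (Thom j), monotone_nat_of_le_succ (by
        intro j q hq
        rw [RingHom.mem_ker] at hq ⊢
        rw [hThomS, RingHom.comp_apply, hq, map_zero])⟩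
    obtain ⟨j₀, hj₀⟩ := monotone_stabilizes_iff_noetherian.2 hNoeth K
    have hTinj : ∀ q, T₀ q = 0 → q = 0 := by
      intro q hq
      obtain ⟨y, hy⟩ := hThomSurj j₀ q
      have hyk : y ∈ K (j₀ + 1) := by
        show Thom (j₀ + 1) y = 0
        rw [hThomS, RingHom.comp_apply, hy, hq]
      have hy0 : y ∈ K j₀ := by
        rw [hj₀ (j₀ + 1) (Nat.le_succ j₀)]
        exact hyk
      rw [← hy]
      exact hy0
    have h1 : ι (T₀ x₀) = 0 := by
      have h2 := RingHom.congr_fun hcT x₀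
      rw [RingHom.comp_apply, RingHom.comp_apply] at h2
      rw [h2, hx₀, hτx]
    have h2 : T₀ x₀ = 0 := hιinj (by rw [h1, map_zero])
    have h3 : x₀ = 0 := hTinj x₀ h2
    rw [← hx₀, h3, map_zero]
  -- σ maps central-coefficient polynomials to central-coefficient polynomials
  have hσZS : ∀ y, y ∈ ZS → σ y ∈ ZS := by
    intro y hy
    have hy' := (hZS y).1 hy
    have hrw : σ y = y.coeff.sum fun m a => σ (AddMonoidAlgebra.single m a) := by
      conv_lhs => rw [← AddMonoidAlgebra.sum_coeff_single y]
      exact map_finsuppSum σ _ _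
    rw [hrw, Finsupp.sum]
    refine sum_mem fun m _ => ?_
    rw [hσ]
    exact Subring.mul_mem _ (hCZS _ (hy' m)) (hGmZS m)
  have hσf : ∀ i, σ (f i) = PolyExt.X A n i := by
    intro i
    have hτσf : τ (σ (f i)) = f i := RingHom.congr_fun hτσ (f i)
    have hd : τ (σ (f i) - PolyExt.X A n i) = 0 := by
      rw [map_sub, hτX, hτσf, sub_self]
    have hdc : ∀ m, (σ (f i) - PolyExt.X A n i).coeff m ∈ Set.center A :=
      (hZS _).1 (Subring.sub_mem _ (hσZS _ (hfZS i)) (hXZS i))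
    exact sub_eq_zero.1 (hτinj0 _ hdc hd)
  have hστ : σ.comp τ = RingHom.id (PolyExt A n) := by
    apply braux_ringHom_ext
    · intro a
      simp only [RingHom.comp_apply, RingHom.id_apply]
      have h1 := hτA a
      rw [hCdef] at h1
      rw [h1, hσC]
    · intro i
      simp only [RingHom.comp_apply, RingHom.id_apply]
      rw [← hXdef, hτX, hσf]
  constructor
  · intro p q hpq
    have hp := RingHom.congr_fun hστ p
    have hq2 := RingHom.congr_fun hστ q
    simp only [RingHom.comp_apply, RingHom.id_apply] at hp hq2
    rw [← hp, ← hq2, hpq]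
  · intro q
    exact ⟨σ q, RingHom.congr_fun hτσ q⟩
end

section
/- Let A and B be commutative k-algebras and let σ: A[s1,...,sn] → B[t1,...,tn] be a k-algebra isomorphism; set fi = σ(si) for i = 1,...,n. Suppose that the images f̄1,...,f̄n of f1,...,fn in (B/N(B))[t̄1,...,t̄n] = B[t1,...,tn]/N(B[t1,...,tn]) generate this ring as a (B/N(B))-algebra. Then f1,...,fn generate B[t1,...,tn] as a B-algebra and f1,...,fn are algebraically independent over B; that is, B[t1,...,tn] = B[f1,...,fn] with f1,...,fn regarded as commuting indeterminates over B. -/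
universe u

open MvPolynomial






lemma coeff_nilpotent_of_nilpotent {B : Type*} [CommRing B] {σ : Type*}
    {p : MvPolynomial σ B} (hp : IsNilpotent p) (m : σ →₀ ℕ) :
    IsNilpotent (p.coeff m) := by
  rw [nilpotent_iff_mem_prime]
  intro J hJ
  have h1 : IsNilpotent (MvPolynomial.map (Ideal.Quotient.mk J) p) :=
    hp.map (MvPolynomial.map (Ideal.Quotient.mk J))
  have h0 : MvPolynomial.map (Ideal.Quotient.mk J) p = 0 := h1.eq_zero
  have := congrArg (MvPolynomial.coeff m) h0
  rw [MvPolynomial.coeff_map] at this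
  exact Ideal.Quotient.eq_zero_iff_mem.mp this

lemma span_finite_nilpotent {R : Type*} [CommRing R] {s : Set R} (hs : s.Finite)
    (h : ∀ x ∈ s, IsNilpotent x) : ∃ m : ℕ, Ideal.span s ^ m = ⊥ := by
  refine Set.Finite.induction_on (motive := fun s _ =>
    (∀ x ∈ s, IsNilpotent x) → ∃ m : ℕ, Ideal.span s ^ m = ⊥) s hs ?_ ?_ h
  · exact fun _ => ⟨1, by simp [Ideal.span_empty]⟩
  · intro a t hat htfin ih h
    obtain ⟨m, hm⟩ := ih (fun x hx => h x (Set.mem_insert_of_mem _ hx))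
    obtain ⟨k, hk⟩ := h a (Set.mem_insert _ _)
    refine ⟨k + m, ?_⟩
    rw [Ideal.span_insert]
    refine le_bot_iff.mp (le_trans Ideal.sup_pow_add_le_pow_sup_pow ?_)
    rw [Ideal.span_singleton_pow, hk, hm]
    simp

lemma adjoin_eq_top_of_nilpotent_core {B R : Type*} [CommRing B] [CommRing R] [Algebra B R]
    (S : Subalgebra B R) (I : Ideal R) (G : Set R) (hspan : I = Ideal.span G)
    (hGS : ∀ g ∈ G, g ∈ S) (m : ℕ) (hm : I ^ m = ⊥)
    (H1 : ∀ x : R, ∃ s ∈ S, x - s ∈ I) : S = ⊤ := by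
  have hGI : ∀ g ∈ G, g ∈ I := fun g hg => hspan ▸ Ideal.subset_span hg
  have C : ∀ x ∈ I, ∃ s, s ∈ S ∧ s ∈ I ∧ x - s ∈ I ^ 2 := by
    intro x hx
    rw [hspan] at hx
    induction hx using Submodule.span_induction with
    | mem g hg =>
      exact ⟨g, hGS g hg, hGI g hg, by simp⟩
    | zero => exact ⟨0, zero_mem _, zero_mem _, by simp⟩
    | add x y _ _ hx hy =>
      obtain ⟨s, hsS, hsI, hs2⟩ := hx
      obtain ⟨t, htS, htI, ht2⟩ := hy
      exact ⟨s + t, add_mem hsS htS, add_mem hsI htI, by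
        rw [show x + y - (s + t) = (x - s) + (y - t) by ring]
        exact add_mem hs2 ht2⟩
    | smul r x hx hxp =>
      obtain ⟨s, hsS, hsI, hs2⟩ := hxp
      obtain ⟨sr, hsrS, hsr⟩ := H1 r
      refine ⟨sr * s, mul_mem hsrS hsS, I.mul_mem_left _ hsI, ?_⟩
      rw [smul_eq_mul, show r * x - sr * s = sr * (x - s) + (r - sr) * x by ring]
      refine add_mem (Ideal.mul_mem_left _ _ hs2) ?_
      rw [sq]
      exact Ideal.mul_mem_mul hsr (hspan ▸ hx)
  have L : ∀ d : ℕ, ∀ x ∈ I ^ (d + 1),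
      ∃ s, s ∈ S ∧ s ∈ I ^ (d + 1) ∧ x - s ∈ I ^ (d + 2) := by
    intro d
    induction d with
    | zero =>
      intro x hx
      obtain ⟨s, h1, h2, h3⟩ := C x (by simpa [pow_one] using hx)
      exact ⟨s, h1, by simpa [pow_one] using h2, h3⟩
    | succ d ih =>
      intro x hx
      rw [pow_succ] at hx
      refine Submodule.mul_induction_on hx ?_ ?_
      · intro a ha b hb
        obtain ⟨sa, hsaS, hsaI, haI⟩ := ih a ha
        obtain ⟨sb, hsbS, hsbI, hbI⟩ := C b hb
        refine ⟨sa * sb, mul_mem hsaS hsbS, ?_, ?_⟩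
        · rw [pow_succ]
          exact Ideal.mul_mem_mul hsaI hsbI
        · rw [show a * b - sa * sb = sa * (b - sb) + (a - sa) * b by ring]
          refine add_mem ?_ ?_
          · have h := Ideal.mul_mem_mul hsaI hbI
            rwa [← pow_add] at h
          · have h := Ideal.mul_mem_mul haI hb
            rwa [← pow_succ] at h
      · intro x y hx hy
        obtain ⟨s, hsS, hsI, hs2⟩ := hx
        obtain ⟨t, htS, htI, ht2⟩ := hy
        exact ⟨s + t, add_mem hsS htS, add_mem hsI htI, by
          rw [show x + y - (s + t) = (x - s) + (y - t) by ring]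
          exact add_mem hs2 ht2⟩
  have F : ∀ d : ℕ, ∀ x : R, ∃ s ∈ S, x - s ∈ I ^ (d + 1) := by
    intro d
    induction d with
    | zero => simpa [pow_one] using H1
    | succ d ih =>
      intro x
      obtain ⟨s, hsS, hx⟩ := ih x
      obtain ⟨t, htS, _, ht⟩ := L d (x - s) hx
      exact ⟨s + t, add_mem hsS htS, by
        rw [show x - (s + t) = (x - s) - t by ring]; exact ht⟩
  rw [eq_top_iff]
  intro x _
  obtain ⟨s, hsS, hx⟩ := F m x
  have : x - s ∈ I ^ m := Ideal.pow_le_pow_right (Nat.le_succ m) hx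
  rw [hm] at this
  have : x = s := by
    have := (Submodule.mem_bot R).mp this
    linear_combination this
  exact this ▸ hsS

lemma ringHom_injective_of_surjective_of_noetherian {R : Type*} [CommRing R]
    [IsNoetherianRing R] (ψ : R →+* R) (hψ : Function.Surjective ψ) :
    Function.Injective ψ := by
  rw [injective_iff_map_eq_zero]
  intro x hx
  let K : ℕ →o Ideal R :=
    ⟨fun i => RingHom.ker (ψ ^ i), by
      refine monotone_nat_of_le_succ fun i y hy => ?_
      rw [RingHom.mem_ker] at hy ⊢
      rw [pow_succ']
      simp only [RingHom.mul_def, RingHom.coe_comp, Function.comp_apply]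
      rw [hy, map_zero]⟩
  obtain ⟨N, hN⟩ := monotone_stabilizes_iff_noetherian.mpr
    (inferInstance : IsNoetherian R R) K
  have hsurj : Function.Surjective (ψ ^ N : R →+* R) := by
    rw [RingHom.coe_pow]
    exact Function.Surjective.iterate hψ N
  obtain ⟨b, hb⟩ := hsurj x
  have hbK : b ∈ K (N + 1) := by
    show (ψ ^ (N + 1)) b = 0
    rw [pow_succ']
    simp only [RingHom.mul_def, RingHom.coe_comp, Function.comp_apply]
    rw [hb, hx]
  have : b ∈ K N := (hN (N + 1) (Nat.le_succ N)).symm ▸ hbK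
  rw [← hb]
  exact this




set_option synthInstance.maxHeartbeats 200000 in
lemma mvpoly_injective_of_surjective {B : Type u} [CommRing B] {n : ℕ}
    (φ : MvPolynomial (Fin n) B →ₐ[B] MvPolynomial (Fin n) B)
    (hφ : Function.Surjective φ) : Function.Injective φ := by
  classical
  rw [injective_iff_map_eq_zero]
  intro p hp
  choose g hg using fun j => hφ (X j)
  let coeffs : MvPolynomial (Fin n) B → Finset B := fun q => q.support.image q.coeff
  let s : Finset B := coeffs p ∪ Finset.univ.biUnion (fun i => coeffs (φ (X i)))
    ∪ Finset.univ.biUnion (fun j => coeffs (g j))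
  let B₀ : Subalgebra ℤ B := Algebra.adjoin ℤ (s : Set B)
  have hmem : ∀ q : MvPolynomial (Fin n) B, (coeffs q : Set B) ⊆ (s : Set B) →
      ∀ m, q.coeff m ∈ B₀ := by
    intro q hq m
    by_cases hm : m ∈ q.support
    · exact Algebra.subset_adjoin (hq (by
        simp only [coeffs, Finset.coe_image, Set.mem_image]
        exact ⟨m, hm, rfl⟩))
    · rw [MvPolynomial.notMem_support_iff] at hm
      rw [hm]
      exact zero_mem B₀
  -- lifting
  have lift : ∀ q : MvPolynomial (Fin n) B, (∀ m, q.coeff m ∈ B₀) →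
      ∃ q₀ : MvPolynomial (Fin n) B₀,
        MvPolynomial.map (algebraMap B₀ B) q₀ = q := by
    intro q hq
    refine ⟨∑ m ∈ q.support, monomial m (⟨q.coeff m, hq m⟩ : B₀), ?_⟩
    rw [map_sum]
    simp only [MvPolynomial.map_monomial]
    exact (MvPolynomial.as_sum q).symm
  have hps : (coeffs p : Set B) ⊆ (s : Set B) := by
    intro c hc; simp only [s, Finset.coe_union, Set.mem_union]; left; left; exact hc
  have hfs : ∀ i, (coeffs (φ (X i)) : Set B) ⊆ (s : Set B) := by
    intro i c hc; simp only [s, Finset.coe_union, Set.mem_union]; left; right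
    simp only [Finset.coe_biUnion, Set.mem_iUnion, Finset.coe_univ, Set.mem_univ]
    exact ⟨i, trivial, hc⟩
  have hgs : ∀ j, (coeffs (g j) : Set B) ⊆ (s : Set B) := by
    intro j c hc; simp only [s, Finset.coe_union, Set.mem_union]; right
    simp only [Finset.coe_biUnion, Set.mem_iUnion, Finset.coe_univ, Set.mem_univ]
    exact ⟨j, trivial, hc⟩
  obtain ⟨p₀, hp₀⟩ := lift p (hmem p hps)
  choose f₀ hf₀ using fun i => lift (φ (X i)) (hmem _ (hfs i))
  choose g₀ hg₀ using fun j => lift (g j) (hmem _ (hgs j))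
  have hinj : Function.Injective (MvPolynomial.map (σ := Fin n) (algebraMap B₀ B)) :=
    MvPolynomial.map_injective _ Subtype.val_injective
  let φ₀ : MvPolynomial (Fin n) B₀ →ₐ[B₀] MvPolynomial (Fin n) B₀ := aeval f₀
  have compat : ∀ q₀ : MvPolynomial (Fin n) B₀,
      MvPolynomial.map (algebraMap B₀ B) (φ₀ q₀) =
        φ (MvPolynomial.map (algebraMap B₀ B) q₀) := by
    intro q₀
    have := MvPolynomial.ringHom_ext (σ := Fin n)
      (f := (MvPolynomial.map (algebraMap B₀ B)).comp φ₀.toRingHom)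
      (g := φ.toRingHom.comp (MvPolynomial.map (algebraMap B₀ B)))
      (fun r => by
        simp only [RingHom.coe_comp, Function.comp_apply, AlgHom.toRingHom_eq_coe,
          RingHom.coe_coe]
        have h1 : φ₀ (C r) = C r := by
          rw [show (C r : MvPolynomial (Fin n) ↥B₀) = algebraMap _ _ r from rfl,
            AlgHom.commutes]
        rw [h1, MvPolynomial.map_C,
          show (C ((algebraMap (↥B₀) B) r) : MvPolynomial (Fin n) B) =
            algebraMap B _ ((algebraMap (↥B₀) B) r) from rfl, AlgHom.commutes])
      (fun i => by
        simp only [RingHom.coe_comp, Function.comp_apply, AlgHom.toRingHom_eq_coe,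
          RingHom.coe_coe]
        rw [MvPolynomial.map_X, show φ₀ (X i) = f₀ i from aeval_X _ _, hf₀])
    exact congrFun (congrArg DFunLike.coe this) q₀
  have hX : ∀ j, φ₀ (g₀ j) = X j := by
    intro j
    apply hinj
    rw [compat, hg₀, hg, MvPolynomial.map_X]
  have hsurj₀ : Function.Surjective φ₀ := by
    rw [← AlgHom.range_eq_top]
    rw [eq_top_iff, ← MvPolynomial.adjoin_range_X]
    refine Algebra.adjoin_le ?_
    rintro _ ⟨j, rfl⟩
    exact ⟨g₀ j, hX j⟩
  haveI : Algebra.FiniteType ℤ B₀ :=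
    (Subalgebra.fg_iff_finiteType _).mp (Subalgebra.fg_adjoin_finset s)
  haveI : IsNoetherianRing B₀ := Algebra.FiniteType.isNoetherianRing ℤ B₀
  have hinj₀ : Function.Injective φ₀ :=
    ringHom_injective_of_surjective_of_noetherian φ₀.toRingHom hsurj₀
  have : φ₀ p₀ = 0 := by
    apply hinj
    rw [compat, hp₀, hp, map_zero]
  have : p₀ = 0 := hinj₀ (by rw [this, map_zero])
  rw [← hp₀, this, map_zero]







/-- Let `A`, `B` be commutative `k`-algebras and
`σ : A[s₁,…,sₙ] → B[t₁,…,tₙ]` a `k`-algebra isomorphism; set `fᵢ = σ(sᵢ)`.  If the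
images of the `fᵢ` in `B[t₁,…,tₙ]/N(B[t₁,…,tₙ]) = (B/N(B))[t̄₁,…,t̄ₙ]` generate that
ring as a `B/N(B)`-algebra (equivalently, as a `B`-algebra), then the `fᵢ` generate
`B[t₁,…,tₙ]` as a `B`-algebra and are algebraically independent over `B`. -/
theorem generators_modulo_nilradical_lift
    (k A B : Type u) [Field k] [CommRing A] [CommRing B] [Algebra k A] [Algebra k B]
    (n : ℕ)
    (σ : MvPolynomial (Fin n) A ≃ₐ[k] MvPolynomial (Fin n) B)
    (f : Fin n → MvPolynomial (Fin n) B)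
    (hf : ∀ i, f i = σ (MvPolynomial.X i))
    (hgen : Algebra.adjoin B
        (Set.range fun i =>
          Ideal.Quotient.mk (nilradical (MvPolynomial (Fin n) B)) (f i)) = ⊤) :
    Algebra.adjoin B (Set.range f) = ⊤ ∧ AlgebraicIndependent B f := by
  classical
  let R := MvPolynomial (Fin n) B
  set N : Ideal R := nilradical R with hN
  set S : Subalgebra B R := Algebra.adjoin B (Set.range f) with hS
  -- image of S in R/N is everything
  have hmap : Subalgebra.map (Ideal.Quotient.mkₐ B N) S = ⊤ := by
    have h2 : Set.range (⇑(Ideal.Quotient.mkₐ B N) ∘ f)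
        = Set.range fun i => (Ideal.Quotient.mk N) (f i) :=
      congrArg Set.range (funext fun i => by
        simp [Function.comp, Ideal.Quotient.mkₐ_eq_mk])
    rw [hS, AlgHom.map_adjoin, ← Set.range_comp, h2, hgen]
  -- each X j differs from an element of S by a nilpotent
  have hdec : ∀ j : Fin n, ∃ s ∈ S, (X j : R) - s ∈ N := by
    intro j
    have : Ideal.Quotient.mkₐ B N (X j) ∈ Subalgebra.map (Ideal.Quotient.mkₐ B N) S := by
      rw [hmap]; trivial
    obtain ⟨s, hsS, hs⟩ := this
    refine ⟨s, hsS, ?_⟩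
    have := Ideal.Quotient.eq.mp (hs : Ideal.Quotient.mk N s = Ideal.Quotient.mk N (X j))
    simpa using (N.neg_mem this)
  choose sf hsfS hsf using hdec
  set ν : Fin n → R := fun j => (X j : R) - sf j with hν
  have hνnil : ∀ j, IsNilpotent (ν j) := fun j => mem_nilradical.mp (hsf j)
  -- generating set of coefficients
  set G : Finset R := Finset.univ.biUnion
    (fun j : Fin n => (ν j).support.image (fun m => (C ((ν j).coeff m) : R))) with hG
  set I : Ideal R := Ideal.span (G : Set R) with hI
  have hGnil : ∀ x ∈ (G : Set R), IsNilpotent x := by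
    intro x hx
    simp only [hG, Finset.coe_biUnion, Finset.coe_univ, Set.mem_univ, Set.iUnion_true,
      Set.mem_iUnion, Finset.coe_image, Set.mem_image] at hx
    obtain ⟨j, m, _, rfl⟩ := hx
    exact (coeff_nilpotent_of_nilpotent (hνnil j) m).map (C : B →+* R)
  have hGS : ∀ g ∈ (G : Set R), g ∈ S := by
    intro g hg
    simp only [hG, Finset.coe_biUnion, Finset.coe_univ, Set.mem_univ, Set.iUnion_true,
      Set.mem_iUnion, Finset.coe_image, Set.mem_image] at hg
    obtain ⟨j, m, _, rfl⟩ := hg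
    rw [show (C ((ν j).coeff m) : R) = algebraMap B R ((ν j).coeff m) from rfl]
    exact S.algebraMap_mem _
  obtain ⟨m, hm⟩ := span_finite_nilpotent G.finite_toSet hGnil
  -- ν j ∈ I
  have hνI : ∀ j, ν j ∈ I := by
    intro j
    rw [hI]
    nth_rewrite 1 [MvPolynomial.as_sum (ν j)]
    refine Ideal.sum_mem _ fun m hmm => ?_
    have hCm : (C ((ν j).coeff m) : R) ∈ (G : Set R) := by
      simp only [hG, Finset.coe_biUnion, Finset.coe_univ, Set.mem_univ, Set.iUnion_true,
        Set.mem_iUnion, Finset.coe_image, Set.mem_image]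
      exact ⟨j, m, hmm, rfl⟩
    have : (monomial m ((ν j).coeff m) : R) = C ((ν j).coeff m) * monomial m 1 := by
      rw [MvPolynomial.C_mul_monomial, mul_one]
    rw [this]
    exact Ideal.mul_mem_right _ _ (Ideal.subset_span hCm)
  -- every element decomposes
  have H1 : ∀ x : R, ∃ s ∈ S, x - s ∈ I := by
    let T : Subalgebra B R :=
      { carrier := {x | ∃ s ∈ S, x - s ∈ I}
        mul_mem' := by
          rintro x y ⟨a, haS, haI⟩ ⟨b, hbS, hbI⟩
          refine ⟨a * b, mul_mem haS hbS, ?_⟩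
          rw [show x * y - a * b = x * (y - b) + (x - a) * b by ring]
          exact I.add_mem (I.mul_mem_left _ hbI) (I.mul_mem_right _ haI)
        one_mem' := ⟨1, one_mem S, by simp⟩
        add_mem' := by
          rintro x y ⟨a, haS, haI⟩ ⟨b, hbS, hbI⟩
          refine ⟨a + b, add_mem haS hbS, ?_⟩
          rw [show x + y - (a + b) = (x - a) + (y - b) by ring]
          exact I.add_mem haI hbI
        zero_mem' := ⟨0, zero_mem S, by simp⟩
        algebraMap_mem' := fun b => ⟨algebraMap B R b, S.algebraMap_mem b, by simp⟩ }
    have hT : T = ⊤ := by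
      rw [eq_top_iff, ← MvPolynomial.adjoin_range_X]
      refine Algebra.adjoin_le ?_
      rintro _ ⟨j, rfl⟩
      exact ⟨sf j, hsfS j, hνI j⟩
    intro x
    have : x ∈ T := hT ▸ trivial
    exact this
  have hSTop : S = ⊤ :=
    adjoin_eq_top_of_nilpotent_core S I (G : Set R) hI hGS m hm H1
  refine ⟨hSTop, ?_⟩
  rw [algebraicIndependent_iff_injective_aeval]
  have hsurj : Function.Surjective (aeval (R := B) f) := by
    rw [← AlgHom.range_eq_top, ← Algebra.adjoin_range_eq_range_aeval]
    exact hSTop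
  exact mvpoly_injective_of_surjective (aeval f) hsurj
end

section
/- Let A and B be k-algebras such that the tensor product A ⊗_k B is a domain. If D_A(1) = A and D_B(1) = B, then D_{A⊗_k B}(1) = A ⊗_k B. -/
open scoped TensorProduct

universe u

/-- `Sw(F)`: the set of all `g` such that `f = a * g * b` for some `a, b` and some
nonzero `f ∈ F` (the set of subwords of elements of `F`). -/
def subwords {A : Type u} [Ring A] (F : Set A) : Set A :=
  {g | ∃ f ∈ F, f ≠ 0 ∧ ∃ a b : A, f = a * g * b}

/-- The `n`-th stage `Dₙ(F)` in the construction of the divisor subalgebra: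
`D₀(F) = F` and `Dₙ₊₁(F)` is the `k`-subalgebra generated by `Sw(Dₙ(F))`. -/
def divisorStage (k : Type u) {A : Type u} [Field k] [Ring A] [Algebra k A] :
    ℕ → Set A → Set A
  | 0, F => F
  | n + 1, F => (Algebra.adjoin k (subwords (divisorStage k n F)) : Subalgebra k A)

/-- The divisor subalgebra `𝔻_A(F) = ⋃ₙ Dₙ(F)`. -/
def divisorSubalgebra (k : Type u) {A : Type u} [Field k] [Ring A] [Algebra k A]
    (F : Set A) : Set A :=
  ⋃ n, divisorStage k n F


section Aux

variable {k A C : Type u} [Field k] [Ring A] [Ring C] [Algebra k A] [Algebra k C]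

lemma divisorStage_subset_succ (n : ℕ) (F : Set A) :
    divisorStage k n F ⊆ divisorStage k (n + 1) F := by
  intro x hx
  show x ∈ (Algebra.adjoin k (subwords (divisorStage k n F)) : Subalgebra k A)
  by_cases h : x = 0
  · rw [h]; exact zero_mem _
  · exact Algebra.subset_adjoin ⟨x, hx, h, 1, 1, by simp⟩

lemma divisorStage_mono {m n : ℕ} (h : m ≤ n) (F : Set A) :
    divisorStage k m F ⊆ divisorStage k n F := by
  induction h with
  | refl => exact le_refl _
  | step _ ih => exact ih.trans (divisorStage_subset_succ _ F)

lemma mem_divisorSubalgebra_mul {x y : A}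
    (hx : x ∈ divisorSubalgebra k ({1} : Set A))
    (hy : y ∈ divisorSubalgebra k ({1} : Set A)) :
    x * y ∈ divisorSubalgebra k ({1} : Set A) := by
  obtain ⟨_, ⟨m, rfl⟩, hx⟩ := hx
  obtain ⟨_, ⟨n, rfl⟩, hy⟩ := hy
  have hx' : x ∈ divisorStage k (max m n + 1) ({1} : Set A) :=
    divisorStage_mono (Nat.le_succ_of_le (le_max_left m n)) _ hx
  have hy' : y ∈ divisorStage k (max m n + 1) ({1} : Set A) :=
    divisorStage_mono (Nat.le_succ_of_le (le_max_right m n)) _ hy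
  exact Set.mem_iUnion.2 ⟨max m n + 1, mul_mem hx' hy'⟩

lemma mem_divisorSubalgebra_add {x y : A}
    (hx : x ∈ divisorSubalgebra k ({1} : Set A))
    (hy : y ∈ divisorSubalgebra k ({1} : Set A)) :
    x + y ∈ divisorSubalgebra k ({1} : Set A) := by
  obtain ⟨_, ⟨m, rfl⟩, hx⟩ := hx
  obtain ⟨_, ⟨n, rfl⟩, hy⟩ := hy
  have hx' : x ∈ divisorStage k (max m n + 1) ({1} : Set A) :=
    divisorStage_mono (Nat.le_succ_of_le (le_max_left m n)) _ hx
  have hy' : y ∈ divisorStage k (max m n + 1) ({1} : Set A) :=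
    divisorStage_mono (Nat.le_succ_of_le (le_max_right m n)) _ hy
  exact Set.mem_iUnion.2 ⟨max m n + 1, add_mem hx' hy'⟩

lemma image_divisorStage_subset (φ : A →ₐ[k] C) (hφ : Function.Injective φ) (n : ℕ) :
    φ '' divisorStage k n ({1} : Set A) ⊆ divisorStage k n ({1} : Set C) := by
  induction n with
  | zero =>
    rintro _ ⟨x, hx, rfl⟩
    simp only [divisorStage, Set.mem_singleton_iff] at hx ⊢
    simp [hx]
  | succ n ih =>
    rintro _ ⟨x, hx, rfl⟩
    have hx' : x ∈ Algebra.adjoin k (subwords (divisorStage k n ({1} : Set A))) := hx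
    show φ x ∈ (Algebra.adjoin k (subwords (divisorStage k n ({1} : Set C))) : Subalgebra k C)
    have hmap : φ x ∈ (Algebra.adjoin k (subwords (divisorStage k n ({1} : Set A)))).map φ :=
      ⟨x, hx', rfl⟩
    rw [AlgHom.map_adjoin] at hmap
    refine Algebra.adjoin_mono ?_ hmap
    rintro _ ⟨g, ⟨f, hf, hf0, a, b, hfab⟩, rfl⟩
    exact ⟨φ f, ih ⟨f, hf, rfl⟩, fun h => hf0 (hφ (h.trans (map_zero φ).symm)),
      φ a, φ b, by rw [hfab]; simp [map_mul]⟩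

end Aux

lemma tmul_one_injective (k A B : Type u) [Field k] [Ring A] [Ring B] [Algebra k A]
    [Algebra k B] [Nontrivial B] :
    Function.Injective (fun a : A => a ⊗ₜ[k] (1 : B)) := by
  classical
  have h1 : LinearIndepOn k id ({(1 : B)} : Set B) :=
    LinearIndepOn.singleton one_ne_zero
  let bs := Module.Basis.extend h1
  have hmem : (1 : B) ∈ h1.extend (Set.subset_univ _) := h1.subset_extend _ rfl
  let f : B →ₗ[k] k := bs.coord ⟨1, hmem⟩
  have hf : f 1 = 1 := by
    have h2 : bs ⟨1, hmem⟩ = (1 : B) := Module.Basis.extend_apply_self h1 ⟨1, hmem⟩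
    have := congrArg f h2
    rw [← this]
    simp [f, Module.Basis.coord_apply, Module.Basis.repr_self]
  let g : A ⊗[k] B →ₗ[k] A :=
    (TensorProduct.rid k A).toLinearMap ∘ₗ LinearMap.lTensor A f
  have hg : ∀ a : A, g (a ⊗ₜ[k] (1 : B)) = a := by
    intro a
    simp [g, LinearMap.lTensor_tmul, hf]
  intro a a' h
  have := congrArg g h
  simpa [hg] using this

lemma one_tmul_injective (k A B : Type u) [Field k] [Ring A] [Ring B] [Algebra k A]
    [Algebra k B] [Nontrivial A] :
    Function.Injective (fun b : B => (1 : A) ⊗ₜ[k] b) := by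
  classical
  have h1 : LinearIndepOn k id ({(1 : A)} : Set A) :=
    LinearIndepOn.singleton one_ne_zero
  let bs := Module.Basis.extend h1
  have hmem : (1 : A) ∈ h1.extend (Set.subset_univ _) := h1.subset_extend _ rfl
  let f : A →ₗ[k] k := bs.coord ⟨1, hmem⟩
  have hf : f 1 = 1 := by
    have h2 : bs ⟨1, hmem⟩ = (1 : A) := Module.Basis.extend_apply_self h1 ⟨1, hmem⟩
    have := congrArg f h2
    rw [← this]
    simp [f, Module.Basis.coord_apply, Module.Basis.repr_self]
  let g : A ⊗[k] B →ₗ[k] B :=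
    (TensorProduct.lid k B).toLinearMap ∘ₗ LinearMap.rTensor B f
  have hg : ∀ b : B, g ((1 : A) ⊗ₜ[k] b) = b := by
    intro b
    simp [g, LinearMap.rTensor_tmul, hf]
  intro b b' h
  have := congrArg g h
  simpa [hg] using this


/-- If `A ⊗_k B` is a domain and `𝔻_A(1) = A`, `𝔻_B(1) = B`, then
`𝔻_{A ⊗ B}(1) = A ⊗_k B`. -/
theorem divisorSubalgebra_tensorProduct
    (k A B : Type u) [Field k] [Ring A] [Ring B] [Algebra k A] [Algebra k B]
    [IsDomain (A ⊗[k] B)]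
    (hA : divisorSubalgebra k ({1} : Set A) = Set.univ)
    (hB : divisorSubalgebra k ({1} : Set B) = Set.univ) :
    divisorSubalgebra k ({1} : Set (A ⊗[k] B)) = Set.univ := by
  have hCnt : Nontrivial (A ⊗[k] B) := inferInstance
  have hAnt : Nontrivial A := by
    by_contra h
    rw [not_nontrivial_iff_subsingleton] at h
    have : (1 : A) = 0 := Subsingleton.elim _ _
    have : (1 : A ⊗[k] B) = 0 := by
      calc (1 : A ⊗[k] B) = (1 : A) ⊗ₜ[k] (1 : B) := rfl
        _ = (0 : A) ⊗ₜ[k] (1 : B) := by rw [this]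
        _ = 0 := TensorProduct.zero_tmul _ _
    exact one_ne_zero this
  have hBnt : Nontrivial B := by
    by_contra h
    rw [not_nontrivial_iff_subsingleton] at h
    have : (1 : B) = 0 := Subsingleton.elim _ _
    have : (1 : A ⊗[k] B) = 0 := by
      calc (1 : A ⊗[k] B) = (1 : A) ⊗ₜ[k] (1 : B) := rfl
        _ = (1 : A) ⊗ₜ[k] (0 : B) := by rw [this]
        _ = 0 := TensorProduct.tmul_zero _ _
    exact one_ne_zero this
  have hL : Function.Injective (Algebra.TensorProduct.includeLeft : A →ₐ[k] A ⊗[k] B) :=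
    tmul_one_injective k A B
  have hR : Function.Injective (Algebra.TensorProduct.includeRight : B →ₐ[k] A ⊗[k] B) :=
    one_tmul_injective k A B
  ext x
  simp only [Set.mem_univ, iff_true]
  induction x using TensorProduct.induction_on with
  | zero =>
    refine Set.mem_iUnion.2 ⟨1, ?_⟩
    show (0 : A ⊗[k] B) ∈ (Algebra.adjoin k (subwords (divisorStage k 0 ({1} : Set (A ⊗[k] B)))) :
      Subalgebra k (A ⊗[k] B))
    exact zero_mem _
  | tmul a b =>
    have ha : a ∈ divisorSubalgebra k ({1} : Set A) := hA ▸ Set.mem_univ a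
    have hb : b ∈ divisorSubalgebra k ({1} : Set B) := hB ▸ Set.mem_univ b
    obtain ⟨_, ⟨m, rfl⟩, ha⟩ := ha
    obtain ⟨_, ⟨n, rfl⟩, hb⟩ := hb
    have ha' : a ⊗ₜ[k] (1 : B) ∈ divisorStage k m ({1} : Set (A ⊗[k] B)) :=
      image_divisorStage_subset (Algebra.TensorProduct.includeLeft : A →ₐ[k] A ⊗[k] B)
        hL m ⟨a, ha, rfl⟩
    have hb' : (1 : A) ⊗ₜ[k] b ∈ divisorStage k n ({1} : Set (A ⊗[k] B)) :=
      image_divisorStage_subset (Algebra.TensorProduct.includeRight : B →ₐ[k] A ⊗[k] B)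
        hR n ⟨b, hb, rfl⟩
    have : a ⊗ₜ[k] b = (a ⊗ₜ[k] (1 : B)) * ((1 : A) ⊗ₜ[k] b) := by
      rw [Algebra.TensorProduct.tmul_mul_tmul, mul_one, one_mul]
    rw [this]
    exact mem_divisorSubalgebra_mul (Set.mem_iUnion.2 ⟨m, ha'⟩) (Set.mem_iUnion.2 ⟨n, hb'⟩)
  | add x y hx hy =>
    exact mem_divisorSubalgebra_add hx hy
end
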